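/- Let κ be an infinite cardinal and X a topological space such that every subset of X of cardinality κ⁺ (the successor cardinal of κ) has an infinite subset whose closure in X is compact. Then every closed discrete subset of X has cardinality at most κ. -/

import Mathlib

open Set Topology Cardinal

universe u

/-- If every `κ⁺`-sized subset of `X` has an infinite subset with compact closure,
then every closed discrete subset of `X` has cardinality at most `κ`. -/
theorem stmt9 {X : Type u} [TopologicalSpace X]
    (κ : Cardinal.{u}) (hκ : ℵ₀ ≤ κ)
    (h : ∀ S : Set X, #S = Order.succ κ →
      ∃ T ⊆ S, T.Infinite ∧ IsCompact (closure T)) :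
    ∀ S : Set X, IsClosed S → DiscreteTopology S → #S ≤ κ := by
  intro S hSc hSd
  by_contra hle
  have hsucc : Order.succ κ ≤ #S := Order.succ_le_of_lt (lt_of_not_ge hle)
  obtain ⟨S', hS'sub, hS'card⟩ := Cardinal.le_mk_iff_exists_subset.mp hsucc
  obtain ⟨T, hTS', hTinf, hTcomp⟩ := h S' hS'card
  have hTS : T ⊆ S := hTS'.trans hS'sub
  have hclT : closure T ⊆ S := hSc.closure_subset_iff.mpr hTS
  have : DiscreteTopology (closure T : Set X) := DiscreteTopology.of_subset hSd hclT
  exact hTinf ((hTcomp.finite (isDiscrete_iff_discreteTopology.mpr this)).subset subset_closure)
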